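/- Let K be a field of characteristic zero, let q ∈ K[X] be nonzero with deg(q) ≤ d, let 1 ≤ k < n, and let M = ((C, 0), (α, β)) ∈ M_n(K(X)) be a matrix in Shape (I): C a companion matrix of dimension k, α an (n−k)×k block, β an (n−k)×(n−k) block, and qM has polynomial entries of degree at most d. Define Γ on column vectors by Γ(v) = βv − v′, and define the (n−k)×k matrix A by prescribing its a-th column as Col_a(A) = − Σ_{i=1}^{k−a} Γ^{i−1}(Col_{a+i}(α)) for 1 ≤ a ≤ k (so Col_k(A) = 0). Let P = ((I_k, 0), (A, I_{n−k})). Then: (1) q^{k−1}·A has polynomial entries of degree at most (k−1)d; (2) q^k·P[M] has polynomial entries of degree at most k·d, where P[M] = (PM + P′)P⁻¹; (3) P[M] = ((C, 0), (AC + α − Γ(A), β)) and the columns 2, ..., k of the lower-left block AC + α − Γ(A) are zero, so P[M] is in Shape (II). -/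

import Mathlib

/-- The operator `Γ` on column vectors: `Γ(v) = β v − v′`, the derivation `der`
being applied entrywise. -/
def cvGamma {F : Type*} [Field F] {m : ℕ} (der : F → F)
    (β : Matrix (Fin m) (Fin m) F) (v : Fin m → F) : Fin m → F :=
  β.mulVec v - fun i => der (v i)

/-- A `k × k` matrix is companion if its rows `1, …, k−1` are the standard
basis rows `e_2, …, e_k` (its last row being arbitrary). -/
def IsCompanionMat {F : Type*} [Field F] {k : ℕ} (C : Matrix (Fin k) (Fin k) F) : Prop :=
  ∀ i j : Fin k, (i : ℕ) + 1 < k → C i j = if (j : ℕ) = (i : ℕ) + 1 then 1 else 0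

/-- The block lower-unitriangular matrix `((I, 0), (A, I))`. -/
def blkUnitriang {F : Type*} [Field F] {k m : ℕ}
    (A : Matrix (Fin m) (Fin k) F) :
    Matrix (Fin k ⊕ Fin m) (Fin k ⊕ Fin m) F :=
  Matrix.fromBlocks 1 0 A 1

set_option linter.unusedSectionVars false

namespace DBZAux
open Polynomial

variable {K : Type*} [Field K]

section Der
variable (der : RatFunc K → RatFunc K)
  (h_add : ∀ a b : RatFunc K, der (a + b) = der a + der b)
  (h_mul : ∀ a b : RatFunc K, der (a * b) = a * der b + der a * b)
  (h_X : der RatFunc.X = 1)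
  (h_C : ∀ c : K, der (RatFunc.C c) = 0)

/-- `der` as an additive monoid hom. -/
noncomputable def derHom : RatFunc K →+ RatFunc K := AddMonoidHom.mk' der h_add

@[simp] lemma derHom_apply (x : RatFunc K) : derHom der h_add x = der x := rfl

include h_add h_mul h_X h_C

lemma der_zero : der (0 : RatFunc K) = 0 := by
  simpa using (derHom der h_add).map_zero

lemma der_one : der (1 : RatFunc K) = 0 := by
  have := h_mul 1 1
  simp at this
  exact this

lemma der_algebraMap (p : Polynomial K) :
    der (algebraMap (Polynomial K) (RatFunc K) p)
      = algebraMap (Polynomial K) (RatFunc K) (derivative p) := by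
  induction p using Polynomial.induction_on with
  | C c => simpa [RatFunc.algebraMap_C] using h_C c
  | add p q hp hq => simp [map_add, h_add, hp, hq]
  | monomial n a ih =>
      have key : der (algebraMap (Polynomial K) (RatFunc K) (Polynomial.C a * Polynomial.X ^ (n+1)))
          = algebraMap (Polynomial K) (RatFunc K) (Polynomial.C a * Polynomial.X ^ n)
            + algebraMap (Polynomial K) (RatFunc K) (derivative (Polynomial.C a * Polynomial.X ^ n))
              * RatFunc.X := by
        have : (Polynomial.C a * Polynomial.X ^ (n+1)) = (Polynomial.C a * Polynomial.X ^ n) * Polynomial.X := by ring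
        rw [this, map_mul, h_mul, RatFunc.algebraMap_X, h_X, ih]
        ring
      rw [key, ← RatFunc.algebraMap_X, ← map_mul, ← map_add]
      congr 1
      cases n with
      | zero => simp
      | succ m =>
          simp only [derivative_mul, derivative_C, derivative_X_pow, Polynomial.C_eq_natCast]
          push_cast
          ring

lemma der_pow_succ (g : RatFunc K) (s : ℕ) :
    der (g ^ (s+1)) = ((s+1 : ℕ) : RatFunc K) * g ^ s * der g := by
  induction s with
  | zero => simp
  | succ m ih =>
      have : g ^ (m+2) = g * g ^ (m+1) := by ring
      rw [this, h_mul, ih]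
      push_cast
      ring

variable (q : Polynomial K) (d : ℕ) (hqd : q.degree ≤ (d : WithBot ℕ))

/-- `f` is a polynomial of degree `≤ e` after multiplying by `q^m`. -/
def PolB (m e : ℕ) (f : RatFunc K) : Prop :=
  ∃ p : Polynomial K, p.degree ≤ (e : WithBot ℕ) ∧
    (algebraMap (Polynomial K) (RatFunc K) q) ^ m * f
      = algebraMap (Polynomial K) (RatFunc K) p

omit h_add h_mul h_X h_C

lemma PolB_zero (m e : ℕ) : PolB q m e 0 :=
  ⟨0, by simp, by simp⟩

lemma PolB_add {m e : ℕ} {f g : RatFunc K} (hf : PolB q m e f) (hg : PolB q m e g) :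
    PolB q m e (f + g) := by
  obtain ⟨p1, hd1, he1⟩ := hf
  obtain ⟨p2, hd2, he2⟩ := hg
  exact ⟨p1 + p2, (Polynomial.degree_add_le _ _).trans (max_le hd1 hd2),
    by rw [mul_add, he1, he2, map_add]⟩

lemma PolB_neg {m e : ℕ} {f : RatFunc K} (hf : PolB q m e f) : PolB q m e (-f) := by
  obtain ⟨p, hd, he⟩ := hf
  exact ⟨-p, by simpa using hd, by rw [mul_neg, he, map_neg]⟩

lemma PolB_sub {m e : ℕ} {f g : RatFunc K} (hf : PolB q m e f) (hg : PolB q m e g) :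
    PolB q m e (f - g) := by
  rw [sub_eq_add_neg]; exact PolB_add q hf (PolB_neg q hg)

lemma PolB_sum {m e : ℕ} {ι : Type*} (s : Finset ι) (f : ι → RatFunc K)
    (hf : ∀ i ∈ s, PolB q m e (f i)) : PolB q m e (∑ i ∈ s, f i) := by
  classical
  induction s using Finset.induction_on with
  | empty => simpa using PolB_zero q m e
  | insert _ _ hni ih =>
      rw [Finset.sum_insert hni]
      exact PolB_add q (hf _ (Finset.mem_insert_self _ _))
        (ih fun i hi => hf i (Finset.mem_insert_of_mem hi))

lemma PolB_mul {m₁ m₂ e₁ e₂ : ℕ} {f g : RatFunc K}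
    (hf : PolB q m₁ e₁ f) (hg : PolB q m₂ e₂ g) : PolB q (m₁ + m₂) (e₁ + e₂) (f * g) := by
  obtain ⟨p1, hd1, he1⟩ := hf
  obtain ⟨p2, hd2, he2⟩ := hg
  refine ⟨p1 * p2, (Polynomial.degree_mul_le _ _).trans ?_, ?_⟩
  · push_cast
    exact add_le_add hd1 hd2
  · rw [pow_add]
    calc (algebraMap (Polynomial K) (RatFunc K) q) ^ m₁
          * (algebraMap (Polynomial K) (RatFunc K) q) ^ m₂ * (f * g)
        = ((algebraMap (Polynomial K) (RatFunc K) q) ^ m₁ * f)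
          * ((algebraMap (Polynomial K) (RatFunc K) q) ^ m₂ * g) := by ring
      _ = _ := by rw [he1, he2, map_mul]

lemma PolB_weaken {m e e' : ℕ} {f : RatFunc K} (hee : e ≤ e') (hf : PolB q m e f) :
    PolB q m e' f := by
  obtain ⟨p, hd, he⟩ := hf
  exact ⟨p, hd.trans (by exact_mod_cast Nat.cast_le.mpr hee), he⟩

include hqd in
lemma PolB_up {m e : ℕ} {f : RatFunc K} (hf : PolB q m e f) : PolB q (m+1) (e+d) f := by
  obtain ⟨p, hd, he⟩ := hf
  refine ⟨p * q, (Polynomial.degree_mul_le _ _).trans ?_, ?_⟩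
  · rw [Nat.cast_add]
    exact add_le_add hd hqd
  · rw [pow_succ, map_mul, ← he]; ring

include hqd in
lemma PolB_le {m m' : ℕ} {f : RatFunc K} (hf : PolB q m (m*d) f) (hmm : m ≤ m') :
    PolB q m' (m'*d) f := by
  induction m' with
  | zero => simpa [Nat.le_zero.mp hmm] using hf
  | succ s ih =>
      rcases Nat.lt_or_ge m (s+1) with h | h
      · have := PolB_up q d hqd (ih (by omega))
        rwa [show s*d+d = (s+1)*d by ring] at this
      · rwa [show m = s+1 by omega] at hf

include h_add h_mul h_X h_C hqd in
lemma PolB_der {m e : ℕ} {f : RatFunc K} (hf : PolB q m e f) :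
    PolB q (m+1) (e+d) (der f) := by
  obtain ⟨p, hd, he⟩ := hf
  have hder := congrArg der he
  rw [h_mul, der_algebraMap der h_add h_mul h_X h_C p] at hder
  have hkey : algebraMap (Polynomial K) (RatFunc K) q
        * (der ((algebraMap (Polynomial K) (RatFunc K) q) ^ m) * f)
      = (m : RatFunc K) * (algebraMap (Polynomial K) (RatFunc K) q.derivative
        * algebraMap (Polynomial K) (RatFunc K) p) := by
    cases m with
    | zero => simp [der_one der h_add h_mul h_X h_C]
    | succ s =>
        rw [der_pow_succ der h_add h_mul h_X h_C _ s, der_algebraMap der h_add h_mul h_X h_C q, ← he]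
        push_cast
        ring
  have hmain : (algebraMap (Polynomial K) (RatFunc K) q) ^ (m+1) * der f
      = algebraMap (Polynomial K) (RatFunc K) q
          * algebraMap (Polynomial K) (RatFunc K) (Polynomial.derivative p)
        - (m : RatFunc K) * (algebraMap (Polynomial K) (RatFunc K) q.derivative
          * algebraMap (Polynomial K) (RatFunc K) p) := by
    rw [← hkey, pow_succ]
    linear_combination (algebraMap (Polynomial K) (RatFunc K) q) * hder
  refine ⟨q * Polynomial.derivative p - (m : Polynomial K) * (q.derivative * p),
    (Polynomial.degree_sub_le _ _).trans (max_le ?_ ?_), ?_⟩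
  · refine (Polynomial.degree_mul_le _ _).trans ?_
    rw [show ((e + d : ℕ) : WithBot ℕ) = (d : WithBot ℕ) + (e : WithBot ℕ) by
      rw [← Nat.cast_add, Nat.add_comm]]
    exact add_le_add hqd (Polynomial.degree_derivative_le.trans hd)
  · refine (Polynomial.degree_mul_le _ _).trans ?_
    have h0 : ((m : Polynomial K)).degree + (q.derivative * p).degree
        ≤ 0 + ((d : WithBot ℕ) + (e : WithBot ℕ)) := by
      refine add_le_add (Polynomial.degree_natCast_le m) ?_
      exact (Polynomial.degree_mul_le _ _).trans
        (add_le_add (Polynomial.degree_derivative_le.trans hqd) hd)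
    refine h0.trans ?_
    rw [zero_add, show ((e + d : ℕ) : WithBot ℕ) = (d : WithBot ℕ) + (e : WithBot ℕ) by
      rw [← Nat.cast_add, Nat.add_comm]]
  · rw [hmain, map_sub, map_mul, map_mul, map_mul, map_natCast]

end Der

end DBZAux

/-- Column `j` of `α`, extended by `0` outside the range. -/
def padCol {F : Type*} [Zero F] {m k : ℕ} (α : Matrix (Fin m) (Fin k) F) (j : ℕ) :
    Fin m → F :=
  if h : j < k then (fun r => α r ⟨j, h⟩) else 0

lemma padCol_lt {F : Type*} [Zero F] {m k : ℕ} (α : Matrix (Fin m) (Fin k) F) {j : ℕ}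
    (h : j < k) : padCol α j = fun r => α r ⟨j, h⟩ := dif_pos h

/-- `cvGamma` as an additive map (pointwise statement). -/
lemma cvGamma_add {F : Type*} [Field F] {m : ℕ} (der : F → F)
    (h_add : ∀ a b : F, der (a + b) = der a + der b)
    (β : Matrix (Fin m) (Fin m) F) (u v : Fin m → F) :
    cvGamma der β (u + v) = cvGamma der β u + cvGamma der β v := by
  funext r
  simp only [cvGamma, Matrix.mulVec_add, Pi.sub_apply, Pi.add_apply, h_add]
  ring

lemma cvGamma_zero {F : Type*} [Field F] {m : ℕ} (der : F → F)
    (h_add : ∀ a b : F, der (a + b) = der a + der b)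
    (β : Matrix (Fin m) (Fin m) F) :
    cvGamma der β 0 = 0 := by
  have h0 : der 0 = 0 := by
    have := h_add 0 0; simp at this; exact this
  funext r
  simp [cvGamma, h0]

/-- `cvGamma` as an `AddMonoidHom` on column vectors. -/
def cvGammaHom {F : Type*} [Field F] {m : ℕ} (der : F → F)
    (h_add : ∀ a b : F, der (a + b) = der a + der b)
    (β : Matrix (Fin m) (Fin m) F) : (Fin m → F) →+ (Fin m → F) where
  toFun := cvGamma der β
  map_zero' := cvGamma_zero der h_add β
  map_add' := cvGamma_add der h_add β

/-- Analysis of `DBZ²`: for `M = ((C, 0), (α, β))` in Shape (I) with `q M` of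
degree `≤ d`, and `A` the matrix with columns
`Col_a(A) = − Σ_{i=1}^{k−a} Γ^{i−1}(Col_{a+i}(α))` (columns indexed from `0`
here), and `P = ((I, 0), (A, I))`: (1) `q^{k−1} A` has polynomial entries of
degree `≤ (k−1)d`; (2) `q^k·P[M]` has polynomial entries of degree `≤ k d`;
(3) `P[M] = ((C, 0), (A C + α − Γ(A), β))` and all columns of the lower-left
block except the first one vanish, i.e. `P[M]` is in Shape (II). -/
theorem dbz_phase_two_analysis {K : Type*} [Field K] [CharZero K] {n k : ℕ}
    (hk1 : 1 ≤ k) (hkn : k < n)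
    (der : RatFunc K → RatFunc K)
    (h_add : ∀ a b : RatFunc K, der (a + b) = der a + der b)
    (h_mul : ∀ a b : RatFunc K, der (a * b) = a * der b + der a * b)
    (h_X : der RatFunc.X = 1)
    (h_C : ∀ c : K, der (RatFunc.C c) = 0)
    (q : Polynomial K) (hq : q ≠ 0) (d : ℕ) (hqd : q.degree ≤ (d : WithBot ℕ))
    (C : Matrix (Fin k) (Fin k) (RatFunc K)) (hC : IsCompanionMat C)
    (α : Matrix (Fin (n - k)) (Fin k) (RatFunc K))
    (β : Matrix (Fin (n - k)) (Fin (n - k)) (RatFunc K))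
    (hM : ∀ i j : Fin k ⊕ Fin (n - k), ∃ p : Polynomial K,
      p.degree ≤ (d : WithBot ℕ) ∧
      algebraMap (Polynomial K) (RatFunc K) q * Matrix.fromBlocks C 0 α β i j
        = algebraMap (Polynomial K) (RatFunc K) p)
    (A : Matrix (Fin (n - k)) (Fin k) (RatFunc K))
    (hA : ∀ (r : Fin (n - k)) (a : Fin k),
      A r a = - ∑ i : Fin (k - 1 - (a : ℕ)),
        (cvGamma der β)^[(i : ℕ)]
          (fun r' => α r' ⟨(a : ℕ) + 1 + (i : ℕ), by
            have h1 := i.isLt; have h2 := a.isLt; omega⟩) r) :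
    (∀ (r : Fin (n - k)) (a : Fin k), ∃ p : Polynomial K,
      p.degree ≤ (((k - 1) * d : ℕ) : WithBot ℕ) ∧
      (algebraMap (Polynomial K) (RatFunc K) q) ^ (k - 1) * A r a
        = algebraMap (Polynomial K) (RatFunc K) p) ∧
    (∀ i j : Fin k ⊕ Fin (n - k), ∃ p : Polynomial K,
      p.degree ≤ ((k * d : ℕ) : WithBot ℕ) ∧
      (algebraMap (Polynomial K) (RatFunc K) q) ^ k *
        ((blkUnitriang A * Matrix.fromBlocks C 0 α β + (blkUnitriang A).map der)
          * (blkUnitriang A)⁻¹) i j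
        = algebraMap (Polynomial K) (RatFunc K) p) ∧
    ((blkUnitriang A * Matrix.fromBlocks C 0 α β + (blkUnitriang A).map der)
        * (blkUnitriang A)⁻¹
      = Matrix.fromBlocks C 0 (A * C + α - (β * A - A.map der)) β ∧
      ∀ (r : Fin (n - k)) (a : Fin k), 1 ≤ (a : ℕ) →
        (A * C + α - (β * A - A.map der)) r a = 0) := by
  classical
  open DBZAux in
  -- basic polynomiality of the entries
  have hαP : ∀ (r : Fin (n-k)) (j : Fin k), DBZAux.PolB q 1 d (α r j) := by
    intro r j
    obtain ⟨p, hd, he⟩ := hM (Sum.inr r) (Sum.inl j)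
    exact ⟨p, hd, by simpa [Matrix.fromBlocks] using he⟩
  have hβP : ∀ (r j : Fin (n-k)), DBZAux.PolB q 1 d (β r j) := by
    intro r j
    obtain ⟨p, hd, he⟩ := hM (Sum.inr r) (Sum.inr j)
    exact ⟨p, hd, by simpa [Matrix.fromBlocks] using he⟩
  have hCP : ∀ (i j : Fin k), DBZAux.PolB q 1 d (C i j) := by
    intro i j
    obtain ⟨p, hd, he⟩ := hM (Sum.inl i) (Sum.inl j)
    exact ⟨p, hd, by simpa [Matrix.fromBlocks] using he⟩
  have hwP : ∀ (j : ℕ) (r : Fin (n-k)), DBZAux.PolB q 1 d (padCol α j r) := by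
    intro j r
    by_cases h : j < k
    · rw [padCol_lt α h]; exact hαP r ⟨j, h⟩
    · simp only [padCol, dif_neg h, Pi.zero_apply]
      exact DBZAux.PolB_zero q 1 d
  -- reformulation of hA with ℕ-indexed sums
  have hA' : ∀ (r : Fin (n-k)) (a : Fin k),
      A r a = -∑ i ∈ Finset.range (k - 1 - (a : ℕ)),
        (cvGamma der β)^[i] (padCol α ((a : ℕ) + 1 + i)) r := by
    intro r a
    rw [hA r a]
    congr 1
    rw [← Fin.sum_univ_eq_sum_range
      (fun i => (cvGamma der β)^[i] (padCol α ((a : ℕ) + 1 + i)) r) (k - 1 - (a : ℕ))]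
    refine Finset.sum_congr rfl fun i _ => ?_
    congr 1
    rw [padCol_lt α (by have h1 := i.isLt; have h2 := a.isLt; omega)]
  -- polynomiality of iterated Gamma applied to padded columns
  have hGam : ∀ (i j : ℕ) (r : Fin (n-k)),
      DBZAux.PolB q (i+1) ((i+1)*d) ((cvGamma der β)^[i] (padCol α j) r) := by
    intro i
    induction i with
    | zero =>
        intro j r
        simpa using hwP j r
    | succ s ih =>
        intro j r
        rw [Function.iterate_succ_apply']
        have hval : cvGamma der β ((cvGamma der β)^[s] (padCol α j)) r
            = (∑ j' : Fin (n-k), β r j' * (cvGamma der β)^[s] (padCol α j) j')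
              - der ((cvGamma der β)^[s] (padCol α j) r) := by
          simp [cvGamma, Matrix.mulVec, dotProduct]
        rw [hval]
        have hsum : DBZAux.PolB q (s+1+1) ((s+1+1)*d)
            (∑ j' : Fin (n-k), β r j' * (cvGamma der β)^[s] (padCol α j) j') := by
          refine DBZAux.PolB_sum q _ _ (fun j' _ => ?_)
          have := DBZAux.PolB_mul q (hβP r j') (ih j j')
          rwa [show 1 + (s+1) = s+1+1 by omega, show d + (s+1)*d = (s+1+1)*d by ring] at this
        have hder : DBZAux.PolB q (s+1+1) ((s+1+1)*d)
            (der ((cvGamma der β)^[s] (padCol α j) r)) := by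
          have := DBZAux.PolB_der der h_add h_mul h_X h_C q d hqd (ih j r)
          rwa [show (s+1)*d + d = (s+1+1)*d by ring] at this
        exact DBZAux.PolB_sub q hsum hder
  -- Part 1
  have part1 : ∀ (r : Fin (n-k)) (a : Fin k), DBZAux.PolB q (k-1) ((k-1)*d) (A r a) := by
    intro r a
    rw [hA' r a]
    refine DBZAux.PolB_neg q (DBZAux.PolB_sum q _ _ (fun i hi => ?_))
    have hik : i + 1 ≤ k - 1 := by
      have := Finset.mem_range.mp hi
      omega
    exact DBZAux.PolB_le q d hqd (hGam i ((a : ℕ) + 1 + i) r) hik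
  -- the gauge transform identity
  have hinv : (blkUnitriang A)⁻¹ = Matrix.fromBlocks 1 0 (-A) 1 := by
    apply Matrix.inv_eq_right_inv
    rw [blkUnitriang, Matrix.fromBlocks_multiply]
    simp [← Matrix.fromBlocks_one]
  have hone_map : ∀ m : ℕ, ((1 : Matrix (Fin m) (Fin m) (RatFunc K))).map der = 0 := by
    intro m
    ext i j
    simp only [Matrix.map_apply, Matrix.one_apply, Matrix.zero_apply]
    split_ifs
    · exact DBZAux.der_one der h_add h_mul h_X h_C
    · exact DBZAux.der_zero der h_add h_mul h_X h_C
  have hzero_map : ((0 : Matrix (Fin k) (Fin (n-k)) (RatFunc K))).map der = 0 := by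
    ext i j
    simp only [Matrix.map_apply, Matrix.zero_apply]
    exact DBZAux.der_zero der h_add h_mul h_X h_C
  have hmap : (blkUnitriang A).map der = Matrix.fromBlocks 0 0 (A.map der) 0 := by
    rw [blkUnitriang, Matrix.fromBlocks_map, hone_map, hone_map, hzero_map]
  have hEq : (blkUnitriang A * Matrix.fromBlocks C 0 α β + (blkUnitriang A).map der)
        * (blkUnitriang A)⁻¹
      = Matrix.fromBlocks C 0 (A * C + α - (β * A - A.map der)) β := by
    rw [hinv, hmap, blkUnitriang, Matrix.fromBlocks_multiply, Matrix.fromBlocks_add,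
      Matrix.fromBlocks_multiply]
    rw [Matrix.fromBlocks_inj]
    refine ⟨by simp, by simp, ?_, by simp⟩
    simp only [Matrix.mul_one, Matrix.mul_zero, Matrix.one_mul, Matrix.zero_mul,
      add_zero, zero_add, Matrix.mul_neg]
    abel
  -- vanishing of the columns 1, ..., k-1 of the lower-left block
  have hcol : ∀ (r : Fin (n-k)) (a : Fin k), 1 ≤ (a : ℕ) →
      (A * C + α - (β * A - A.map der)) r a = 0 := by
    intro r a ha
    have hAlast : ∀ r' : Fin (n-k), A r' ⟨k-1, by omega⟩ = 0 := by
      intro r'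
      rw [hA' r' ⟨k-1, by omega⟩]
      simp
    -- (A * C) r a = A r ⟨a-1⟩
    have hAC : (A * C) r a = A r ⟨(a : ℕ) - 1, by omega⟩ := by
      have : (A * C) r a = ∑ b : Fin k, A r b * C b a := by
        simp [Matrix.mul_apply]
      rw [this]
      rw [Finset.sum_eq_single (⟨(a : ℕ) - 1, by omega⟩ : Fin k)]
      · rw [hC ⟨(a : ℕ) - 1, by omega⟩ a (by simp; omega)]
        simp only [if_pos (by simp; omega : (a : ℕ) = ((⟨(a : ℕ) - 1, by omega⟩ : Fin k) : ℕ) + 1)]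
        rw [mul_one]
      · intro b _ hb
        by_cases hbk : (b : ℕ) + 1 < k
        · rw [hC b a hbk, if_neg, mul_zero]
          intro hcontra
          apply hb
          apply Fin.ext
          simp
          omega
        · have hbeq : b = ⟨k-1, by omega⟩ := by
            apply Fin.ext; simp; omega
          rw [hbeq, hAlast, zero_mul]
      · intro hmem
        exact absurd (Finset.mem_univ _) hmem
    -- column a of A as a function
    have hcolA : (fun j => A j a) = -∑ i ∈ Finset.range (k - 1 - (a : ℕ)),
        (cvGamma der β)^[i] (padCol α ((a : ℕ) + 1 + i)) := by
      funext j
      rw [hA' j a]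
      simp
    -- β * A entries via mulVec
    have hβA : (β * A) r a - der (A r a)
        = cvGamma der β (fun j => A j a) r := by
      simp only [cvGamma, Pi.sub_apply]
      congr 1
    -- Gamma of the column
    have hGcol : cvGamma der β (fun j => A j a)
        = -∑ i ∈ Finset.range (k - 1 - (a : ℕ)),
            (cvGamma der β)^[i+1] (padCol α ((a : ℕ) + 1 + i)) := by
      rw [hcolA]
      rw [show (cvGamma der β) = ⇑(cvGammaHom der h_add β) from rfl]
      rw [map_neg, map_sum]
      refine neg_inj.mpr (Finset.sum_congr rfl fun i _ => ?_)
      rw [Function.iterate_succ_apply']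
    -- A r ⟨a-1⟩ expanded
    have hprev : A r ⟨(a : ℕ) - 1, by omega⟩
        = -((∑ i ∈ Finset.range (k - 1 - (a : ℕ)),
            (cvGamma der β)^[i+1] (padCol α ((a : ℕ) + 1 + i)) r) + α r a) := by
      rw [hA' r ⟨(a : ℕ) - 1, by omega⟩]
      have h1 : k - 1 - (((⟨(a : ℕ) - 1, by omega⟩ : Fin k)) : ℕ)
          = (k - 1 - (a : ℕ)) + 1 := by
        simp only [Fin.val_mk]; omega
      rw [h1, Finset.sum_range_succ']
      congr 1
      congr 1
      · refine Finset.sum_congr rfl fun i _ => ?_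
        have h2 : ((⟨(a : ℕ) - 1, by omega⟩ : Fin k) : ℕ) + 1 + (i + 1)
            = (a : ℕ) + 1 + i := by
          simp only [Fin.val_mk]; omega
        rw [h2]
      · have h3 : ((⟨(a : ℕ) - 1, by omega⟩ : Fin k) : ℕ) + 1 + 0 = (a : ℕ) := by
          simp only [Fin.val_mk]; omega
        rw [h3]
        simp only [Function.iterate_zero, id]
        rw [padCol_lt α a.isLt]
    have hsplit : (A * C + α - (β * A - A.map der)) r a
        = (A * C) r a + α r a - ((β * A) r a - der (A r a)) := by
      simp [Matrix.sub_apply, Matrix.add_apply, Matrix.map_apply]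
    rw [hsplit, hAC, hprev, hβA, hGcol]
    have happ : (-∑ i ∈ Finset.range (k - 1 - (a : ℕ)),
          (cvGamma der β)^[i+1] (padCol α ((a : ℕ) + 1 + i))) r
        = -∑ i ∈ Finset.range (k - 1 - (a : ℕ)),
          (cvGamma der β)^[i+1] (padCol α ((a : ℕ) + 1 + i)) r := by
      simp
    rw [happ]
    ring
  refine ⟨part1, ?_, hEq, hcol⟩
  -- Part 2
  intro i j
  rw [hEq]
  have hL : ∀ (r : Fin (n-k)) (a : Fin k),
      DBZAux.PolB q k (k*d) ((A * C + α - (β * A - A.map der)) r a) := by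
    intro r a
    have hACt : DBZAux.PolB q k (k*d) ((A * C) r a) := by
      have : (A * C) r a = ∑ b : Fin k, A r b * C b a := by simp [Matrix.mul_apply]
      rw [this]
      refine DBZAux.PolB_sum q _ _ (fun b _ => ?_)
      have := DBZAux.PolB_mul q (part1 r b) (hCP b a)
      rwa [show (k-1) + 1 = k by omega, show (k-1)*d + d = k*d by
        have : k - 1 + 1 = k := by omega
        calc (k-1)*d + d = ((k-1)+1)*d := by ring
          _ = k*d := by rw [this]] at this
    have hαt : DBZAux.PolB q k (k*d) (α r a) := by
      have h1 : DBZAux.PolB q 1 (1*d) (α r a) := by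
        rw [one_mul]; exact hαP r a
      exact DBZAux.PolB_le q d hqd h1 hk1
    have hβAt : DBZAux.PolB q k (k*d) ((β * A) r a) := by
      have : (β * A) r a = ∑ b : Fin (n-k), β r b * A b a := by simp [Matrix.mul_apply]
      rw [this]
      refine DBZAux.PolB_sum q _ _ (fun b _ => ?_)
      have := DBZAux.PolB_mul q (hβP r b) (part1 b a)
      rwa [show 1 + (k-1) = k by omega, show d + (k-1)*d = k*d by
        have : 1 + (k - 1) = k := by omega
        calc d + (k-1)*d = (1+(k-1))*d := by ring
          _ = k*d := by rw [this]] at this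
    have hdAt : DBZAux.PolB q k (k*d) ((A.map der) r a) := by
      have := DBZAux.PolB_der der h_add h_mul h_X h_C q d hqd (part1 r a)
      have h2 : (A.map der) r a = der (A r a) := rfl
      rw [h2]
      rwa [show (k-1) + 1 = k by omega, show (k-1)*d + d = k*d by
        have : k - 1 + 1 = k := by omega
        calc (k-1)*d + d = ((k-1)+1)*d := by ring
          _ = k*d := by rw [this]] at this
    simp only [Matrix.sub_apply, Matrix.add_apply]
    exact DBZAux.PolB_sub q (DBZAux.PolB_add q hACt hαt) (DBZAux.PolB_sub q hβAt hdAt)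
  rcases i with i | i <;> rcases j with j | j
  · have h1 : DBZAux.PolB q 1 (1*d) (C i j) := by rw [one_mul]; exact hCP i j
    exact DBZAux.PolB_le q d hqd h1 hk1
  · exact DBZAux.PolB_zero q k (k*d)
  · exact hL i j
  · have h1 : DBZAux.PolB q 1 (1*d) (β i j) := by rw [one_mul]; exact hβP i j
    exact DBZAux.PolB_le q d hqd h1 hk1
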